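/- Let n > 3 be odd with prime factorization n = p_1^{α_1} p_2^{α_2} ⋯ p_k^{α_k}. The number of admissible m for which L_n(m) is strictly non-right alternative — i.e. (x·y)·y ≠ x·(y·y) for every pair of distinct non-identity elements x, y — equals P_n = ∏_{i=1}^{k} (p_i − 3) p_i^{α_i − 1}; the same count P_n holds for the strictly non-left alternative loops in L_n (those with (x·x)·y ≠ x·(x·y) for every pair of distinct non-identity elements x, y). -/

import Mathlib

/-- `m` is admissible for `n`: `0 < m < n`, `gcd(m, n) = 1` and `gcd(m - 1, n) = 1`. -/
def LAdmissible (n m : ℕ) : Prop :=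
  0 < m ∧ m < n ∧ Nat.gcd m n = 1 ∧ Nat.gcd (m - 1) n = 1

/-- The product of the loop `L_n(m)`: the carrier is `Option (ZMod n)`, with `none`
playing the role of the identity `e` and `some i` the element `i ∈ Z_n`.
`e·x = x·e = x`, `i·i = e`, and for `i ≠ j`, `i·j = m·j - (m-1)·i (mod n)`. -/
def lmul (n m : ℕ) : Option (ZMod n) → Option (ZMod n) → Option (ZMod n)
  | none, x => x
  | some i, none => some i
  | some i, some j =>
      if i = j then none
      else some ((m : ZMod n) * j - ((m : ZMod n) - 1) * i)

section Aux

/-! ### Counting machinery -/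

/-- the number of `x : ZMod n` with `x - a` a unit for all `a ∈ A`. -/
noncomputable def cnt (A : Finset ℤ) (n : ℕ) : ℕ :=
  Nat.card {x : ZMod n // ∀ a ∈ A, IsUnit (x - (a : ZMod n))}

lemma fiber_count {p k : ℕ} [NeZero (p ^ k)] (hp : p.Prime) (hk : k ≠ 0) (S : Finset (ZMod p)) :
    (Finset.univ.filter (fun x : ZMod (p ^ k) =>
      ZMod.castHom (dvd_pow_self p hk) (ZMod p) x ∈ S)).card = S.card * p ^ (k - 1) := by
  haveI : Fact p.Prime := ⟨hp⟩
  set φ := ZMod.castHom (dvd_pow_self p hk) (ZMod p) with hφ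
  have hsurj : Function.Surjective φ := by
    intro a
    exact ⟨(a.val : ZMod (p ^ k)), by simp [φ, ZMod.natCast_zmod_val]⟩
  have hconst : ∀ a b : ZMod p,
      (Finset.univ.filter fun x : ZMod (p ^ k) => φ x = a).card
        = (Finset.univ.filter fun x : ZMod (p ^ k) => φ x = b).card := by
    intro a b
    obtain ⟨d, hd⟩ := hsurj (b - a)
    apply Finset.card_bij' (fun x _ => x + d) (fun y _ => y - d)
    · intro x hx
      simp only [Finset.mem_filter, Finset.mem_univ, true_and] at hx ⊢
      rw [map_add, hx, hd]; ring
    · intro y hy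
      simp only [Finset.mem_filter, Finset.mem_univ, true_and] at hy ⊢
      rw [map_sub, hy, hd]; ring
    · intro x _; ring
    · intro y _; ring
  have hfib : ∀ a : ZMod p,
      (Finset.univ.filter fun x : ZMod (p ^ k) => φ x = a).card = p ^ (k - 1) := by
    intro a
    have hsum : ∑ b : ZMod p,
        (Finset.univ.filter fun x : ZMod (p ^ k) => φ x = b).card
          = Fintype.card (ZMod (p ^ k)) := by
      rw [Fintype.card, Finset.card_eq_sum_card_fiberwise (f := φ) (t := Finset.univ)
        (fun x _ => Finset.mem_univ _)]
    have hsum2 : ∑ b : ZMod p,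
        (Finset.univ.filter fun x : ZMod (p ^ k) => φ x = b).card
          = (Fintype.card (ZMod p)) * (Finset.univ.filter fun x : ZMod (p ^ k) => φ x = a).card := by
      rw [Finset.sum_congr rfl (fun b _ => hconst b a), Finset.sum_const, Fintype.card,
        smul_eq_mul]
    rw [hsum2, ZMod.card, ZMod.card] at hsum
    have : p * (Finset.univ.filter fun x : ZMod (p ^ k) => φ x = a).card = p * p ^ (k - 1) := by
      rw [hsum, ← pow_succ']
      congr 1
      omega
    exact Nat.eq_of_mul_eq_mul_left hp.pos this
  rw [Finset.card_eq_sum_card_fiberwise (f := φ) (s := Finset.univ.filter fun x => φ x ∈ S) (t := S)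
    (fun x hx => (Finset.mem_filter.mp hx).2)]
  rw [Finset.sum_congr rfl (fun a ha => ?_), Finset.sum_const, smul_eq_mul]
  rw [Finset.filter_filter]
  rw [← hfib a]
  congr 1
  apply Finset.filter_congr
  intro x _
  simp only [and_iff_right_iff_imp]
  rintro h; rwa [h]

lemma isUnit_iff_castHom {p k : ℕ} [NeZero (p ^ k)] (hp : p.Prime) (hk : k ≠ 0)
    (x : ZMod (p ^ k)) :
    IsUnit x ↔ ZMod.castHom (dvd_pow_self p hk) (ZMod p) x ≠ 0 := by
  haveI : Fact p.Prime := ⟨hp⟩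
  conv_lhs => rw [← ZMod.natCast_zmod_val x]
  rw [ZMod.isUnit_iff_coprime, ZMod.castHom_apply, ← ZMod.natCast_val, Ne,
    ZMod.natCast_eq_zero_iff, Nat.coprime_pow_right_iff (Nat.pos_of_ne_zero hk),
    Nat.coprime_comm]
  exact hp.coprime_iff_not_dvd

lemma cnt_prime_pow {p k : ℕ} (hp : p.Prime) (hk : k ≠ 0) (A : Finset ℤ)
    (hA : (A.image (fun a : ℤ => (a : ZMod p))).card = 3) :
    cnt A (p ^ k) = (p - 3) * p ^ (k - 1) := by
  haveI : Fact p.Prime := ⟨hp⟩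
  haveI : NeZero (p ^ k) := ⟨pow_ne_zero _ hp.pos.ne'⟩
  set φ := ZMod.castHom (dvd_pow_self p hk) (ZMod p) with hφ
  have key : ∀ x : ZMod (p ^ k),
      (∀ a ∈ A, IsUnit (x - (a : ZMod (p ^ k)))) ↔
        φ x ∈ (A.image (fun a : ℤ => (a : ZMod p)))ᶜ := by
    intro x
    rw [Finset.mem_compl, Finset.mem_image]
    push_neg
    constructor
    · intro h a ha
      have := (isUnit_iff_castHom hp hk _).mp (h a ha)
      rw [map_sub, map_intCast, sub_ne_zero] at this
      exact fun he => this he.symm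
    · intro h a ha
      rw [isUnit_iff_castHom hp hk, map_sub, map_intCast, sub_ne_zero]
      exact fun he => h a ha he.symm
  rw [cnt, Nat.card_eq_fintype_card, Fintype.card_subtype]
  rw [show (Finset.univ.filter fun x : ZMod (p^k) => ∀ a ∈ A, IsUnit (x - (a : ZMod (p ^ k))))
      = Finset.univ.filter fun x => φ x ∈ (A.image (fun a : ℤ => (a : ZMod p)))ᶜ from
    Finset.filter_congr (fun x _ => by rw [key])]
  rw [fiber_count hp hk, Finset.card_compl, hA, ZMod.card]

lemma cnt_one (A : Finset ℤ) : cnt A 1 = 1 := by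
  rw [cnt]
  haveI : Unique {x : ZMod 1 // ∀ a ∈ A, IsUnit (x - (a : ZMod 1))} :=
    { default := ⟨0, fun a _ => isUnit_of_subsingleton _⟩
      uniq := fun x => Subtype.ext (Subsingleton.elim _ _) }
  exact Nat.card_unique

lemma isUnit_prod_iff {M N : Type*} [CommMonoid M] [CommMonoid N] {x : M × N} :
    IsUnit x ↔ IsUnit x.1 ∧ IsUnit x.2 := by
  constructor
  · intro h
    exact ⟨h.map (MonoidHom.fst M N), h.map (MonoidHom.snd M N)⟩
  · rintro ⟨h1, h2⟩
    exact IsUnit.of_mul_eq_one (a := x) (((h1.unit⁻¹ : Mˣ) : M), ((h2.unit⁻¹ : Nˣ) : N))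
      (Prod.ext h1.mul_val_inv h2.mul_val_inv)

lemma cnt_mul (A : Finset ℤ) {a b : ℕ} (h : a.Coprime b) :
    cnt A (a * b) = cnt A a * cnt A b := by
  rw [cnt, cnt, cnt, ← Nat.card_prod]
  refine Nat.card_congr ?_
  refine Equiv.trans (Equiv.subtypeEquiv (ZMod.chineseRemainder h) (fun x => ?_))
    (Equiv.subtypeProdEquivProd (p := fun u : ZMod a => ∀ c ∈ A, IsUnit (u - (c : ZMod a)))
      (q := fun v : ZMod b => ∀ c ∈ A, IsUnit (v - (c : ZMod b))))
  rw [← forall_and]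
  constructor
  · intro hx c
    have key : c ∈ A → IsUnit ((ZMod.chineseRemainder h) x - ((c : ℤ) : ZMod a × ZMod b)) := by
      intro hc
      have := (hx c hc).map (ZMod.chineseRemainder h)
      rwa [map_sub, map_intCast] at this
    exact ⟨fun hc => (isUnit_prod_iff.mp (key hc)).1, fun hc => (isUnit_prod_iff.mp (key hc)).2⟩
  · intro hx c hc
    have h1 := (hx c).1 hc
    have h2 := (hx c).2 hc
    have : IsUnit ((ZMod.chineseRemainder h) x - ((c : ℤ) : ZMod a × ZMod b)) := by
      rw [isUnit_prod_iff]
      exact ⟨by simpa using h1, by simpa using h2⟩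
    have := this.map (ZMod.chineseRemainder h).symm
    rwa [map_sub, map_intCast, RingEquiv.symm_apply_apply] at this

lemma cnt_eq {n : ℕ} (hn : n ≠ 0) (hodd : Odd n) (A : Finset ℤ)
    (hA : ∀ p : ℕ, p.Prime → p ≠ 2 → (A.image (fun a : ℤ => (a : ZMod p))).card = 3) :
    cnt A n = ∏ p ∈ n.primeFactors, (p - 3) * p ^ (n.factorization p - 1) := by
  rw [Nat.multiplicative_factorization (cnt A) (fun x y h => cnt_mul A h) (cnt_one A) hn,
    Finsupp.prod, Nat.support_factorization]
  refine Finset.prod_congr rfl (fun p hp => ?_)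
  have hpp := Nat.prime_of_mem_primeFactors hp
  have hdvd := Nat.dvd_of_mem_primeFactors hp
  have hne2 : p ≠ 2 := by
    rintro rfl
    exact (Nat.not_even_iff_odd.mpr hodd) (even_iff_two_dvd.mpr hdvd)
  have hk : n.factorization p ≠ 0 := by
    have := (Nat.Prime.dvd_iff_one_le_factorization hpp hn).mp hdvd
    omega
  exact cnt_prime_pow hpp hk A (hA p hpp hne2)

/-! ### Loop identities -/

lemma lmul_self (n m : ℕ) (i : ZMod n) : lmul n m (some i) (some i) = none := by
  simp [lmul]

lemma lmul_of_ne (n m : ℕ) {i j : ZMod n} (h : i ≠ j) :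
    lmul n m (some i) (some j) = some ((m : ZMod n) * j - ((m : ZMod n) - 1) * i) := by
  simp [lmul, h]

lemma lmul_none (n m : ℕ) (i : ZMod n) : lmul n m (some i) none = some i := rfl

lemma lmul_none' (n m : ℕ) (x : Option (ZMod n)) : lmul n m none x = x := rfl

lemma isUnit_iff_nzd {n : ℕ} [NeZero n] (c : ZMod n) :
    IsUnit c ↔ ∀ d : ZMod n, d ≠ 0 → c * d ≠ 0 := by
  constructor
  · intro hc d hd h
    exact hd ((hc.mul_right_eq_zero).mp h)
  · intro h
    have hinj : Function.Injective (fun d : ZMod n => c * d) := by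
      intro a b hab
      by_contra hne
      exact h (a - b) (sub_ne_zero.mpr hne) (by simp only at hab; rw [mul_sub, hab, sub_self])
    obtain ⟨b, hb⟩ := (Finite.injective_iff_surjective.mp hinj) 1
    exact IsUnit.of_mul_eq_one (a := c) b hb

lemma right_iff {n m : ℕ} [NeZero n] (hm1 : IsUnit ((m : ZMod n) - 1)) :
    (∀ x y : ZMod n, x ≠ y →
        lmul n m (lmul n m (some x) (some y)) (some y)
          ≠ lmul n m (some x) (lmul n m (some y) (some y)))
      ↔ IsUnit ((m : ZMod n) * ((m : ZMod n) - 2)) := by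
  set M := (m : ZMod n) with hM
  have hz : ∀ x y : ZMod n, x ≠ y → M * y - (M - 1) * x ≠ y := by
    intro x y hxy he
    have h0 : (M - 1) * (y - x) = 0 := by linear_combination he
    exact hxy (sub_eq_zero.mp (hm1.mul_right_eq_zero.mp h0)).symm
  rw [isUnit_iff_nzd]
  constructor
  · intro h d hd heq
    have hc := h d 0 hd
    rw [lmul_self, lmul_none, lmul_of_ne n m hd, lmul_of_ne n m (hz d 0 hd)] at hc
    exact hc (by rw [Option.some_inj]; linear_combination heq)
  · intro h x y hxy
    rw [lmul_self, lmul_none, lmul_of_ne n m hxy, lmul_of_ne n m (hz x y hxy), Ne,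
      Option.some_inj]
    intro heq
    exact h (x - y) (sub_ne_zero.mpr hxy) (by linear_combination heq)

lemma left_iff {n m : ℕ} [NeZero n] (hm : IsUnit (m : ZMod n)) :
    (∀ x y : ZMod n, x ≠ y →
        lmul n m (lmul n m (some x) (some x)) (some y)
          ≠ lmul n m (some x) (lmul n m (some x) (some y)))
      ↔ IsUnit (((m : ZMod n) - 1) * ((m : ZMod n) + 1)) := by
  set M := (m : ZMod n) with hM
  have hz : ∀ x y : ZMod n, x ≠ y → x ≠ M * y - (M - 1) * x := by
    intro x y hxy he
    have h0 : M * (y - x) = 0 := by linear_combination -he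
    exact hxy (sub_eq_zero.mp (hm.mul_right_eq_zero.mp h0)).symm
  rw [isUnit_iff_nzd]
  constructor
  · intro h d hd heq
    have hc := h 0 d (Ne.symm hd)
    rw [lmul_self, lmul_none', lmul_of_ne n m (Ne.symm hd),
      lmul_of_ne n m (hz 0 d (Ne.symm hd))] at hc
    exact hc (by rw [Option.some_inj]; linear_combination -heq)
  · intro h x y hxy
    rw [lmul_self, lmul_none', lmul_of_ne n m hxy, lmul_of_ne n m (hz x y hxy), Ne,
      Option.some_inj]
    intro heq
    exact h (y - x) (sub_ne_zero.mpr (Ne.symm hxy)) (by linear_combination -heq)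

/-! ### Set identification -/

lemma set_eq {n : ℕ} (hn : 3 < n) (C : ℕ → Prop) (U : ZMod n → Prop)
    (hCU : ∀ m : ℕ, m < n → IsUnit (m : ZMod n) → IsUnit ((m : ZMod n) - 1) →
      (C m ↔ U ((m : ZMod n)))) :
    {m : ℕ | LAdmissible n m ∧ C m}
      = ZMod.val '' {x : ZMod n | IsUnit x ∧ IsUnit (x - 1) ∧ U x} := by
  haveI : NeZero n := ⟨by omega⟩
  haveI : Fact (1 < n) := ⟨by omega⟩
  ext m
  simp only [Set.mem_setOf_eq, Set.mem_image, LAdmissible]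
  constructor
  · rintro ⟨⟨hm0, hmn, hg1, hg2⟩, hc⟩
    have hm2 : 2 ≤ m := by
      by_contra h
      have hm1 : m = 1 := by omega
      rw [hm1] at hg2
      simp only [Nat.sub_self, Nat.gcd_zero_left] at hg2
      omega
    have hu : IsUnit (m : ZMod n) := (ZMod.isUnit_iff_coprime m n).mpr hg1
    have hcast1 : ((m - 1 : ℕ) : ZMod n) = (m : ZMod n) - 1 := by
      rw [Nat.cast_sub (by omega : 1 ≤ m), Nat.cast_one]
    have hu1 : IsUnit ((m : ZMod n) - 1) := by
      rw [← hcast1]; exact (ZMod.isUnit_iff_coprime _ n).mpr hg2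
    exact ⟨(m : ZMod n), ⟨hu, hu1, (hCU m hmn hu hu1).mp hc⟩, ZMod.val_cast_of_lt hmn⟩
  · rintro ⟨x, ⟨hu, hu1, hU⟩, rfl⟩
    have hcast : ((x.val : ℕ) : ZMod n) = x := ZMod.natCast_zmod_val x
    have hvn : x.val < n := ZMod.val_lt x
    have hx0 : x ≠ 0 := hu.ne_zero
    have hv0 : 0 < x.val := Nat.pos_of_ne_zero (fun h => hx0 ((ZMod.val_eq_zero x).mp h))
    have hx1 : x ≠ 1 := fun h => by rw [h, sub_self] at hu1; exact hu1.ne_zero rfl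
    have hv1 : x.val ≠ 1 := fun h => hx1 (by rw [← hcast, h, Nat.cast_one])
    have hg1 : Nat.gcd x.val n = 1 :=
      (ZMod.isUnit_iff_coprime x.val n).mp (by rw [hcast]; exact hu)
    have hcast1 : ((x.val - 1 : ℕ) : ZMod n) = x - 1 := by
      rw [Nat.cast_sub (by omega : 1 ≤ x.val), hcast, Nat.cast_one]
    have hg2 : Nat.gcd (x.val - 1) n = 1 :=
      (ZMod.isUnit_iff_coprime _ n).mp (by rw [hcast1]; exact hu1)
    refine ⟨⟨hv0, hvn, hg1, hg2⟩, ?_⟩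
    exact (hCU x.val hvn (by rw [hcast]; exact hu) (by rw [hcast, ← hcast1, hcast1]; exact hu1)).mpr
      (by rw [hcast]; exact hU)

end Aux

/-- The number of admissible `m` for which `L_n(m)` is strictly non-right
alternative equals `P_n = ∏ (p_i - 3) * p_i ^ (α_i - 1)`, and the same count
holds for the strictly non-left alternative loops in `L_n`. -/
theorem stmt4 (n : ℕ) (hn : 3 < n) (hodd : Odd n) :
    {m : ℕ | LAdmissible n m ∧
        ∀ x y : ZMod n, x ≠ y →
          lmul n m (lmul n m (some x) (some y)) (some y)
            ≠ lmul n m (some x) (lmul n m (some y) (some y))}.ncard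
      = ∏ p ∈ n.primeFactors, (p - 3) * p ^ (n.factorization p - 1)
    ∧ {m : ℕ | LAdmissible n m ∧
        ∀ x y : ZMod n, x ≠ y →
          lmul n m (lmul n m (some x) (some x)) (some y)
            ≠ lmul n m (some x) (lmul n m (some x) (some y))}.ncard
      = ∏ p ∈ n.primeFactors, (p - 3) * p ^ (n.factorization p - 1) := by
  haveI : NeZero n := ⟨by omega⟩
  haveI : Fact (1 < n) := ⟨by omega⟩
  have h20 : ∀ p : ℕ, p.Prime → p ≠ 2 → (2 : ZMod p) ≠ 0 := by
    intro p hp h2 h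
    haveI : Fact p.Prime := ⟨hp⟩
    rw [show ((2 : ZMod p)) = ((2 : ℕ) : ZMod p) by push_cast; ring,
      ZMod.natCast_eq_zero_iff] at h
    exact h2 ((Nat.prime_dvd_prime_iff_eq hp Nat.prime_two).mp h)
  have hA1 : ∀ p : ℕ, p.Prime → p ≠ 2 →
      ((({0, 1, 2} : Finset ℤ)).image (fun a : ℤ => (a : ZMod p))).card = 3 := by
    intro p hp h2
    haveI : Fact p.Prime := ⟨hp⟩
    refine Finset.card_eq_three.mpr ⟨0, 1, 2, zero_ne_one,
      fun h => (h20 p hp h2) h.symm,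
      fun h => one_ne_zero (α := ZMod p) (by linear_combination -h), ?_⟩
    simp only [Finset.image_insert, Finset.image_singleton]
    push_cast
    rfl
  have hA2 : ∀ p : ℕ, p.Prime → p ≠ 2 →
      ((({-1, 0, 1} : Finset ℤ)).image (fun a : ℤ => (a : ZMod p))).card = 3 := by
    intro p hp h2
    haveI : Fact p.Prime := ⟨hp⟩
    refine Finset.card_eq_three.mpr ⟨-1, 0, 1,
      fun h => one_ne_zero (α := ZMod p) (by linear_combination -h),
      fun h => (h20 p hp h2) (by linear_combination -h),
      zero_ne_one, ?_⟩
    simp only [Finset.image_insert, Finset.image_singleton]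
    push_cast
    rfl
  constructor
  · rw [set_eq hn _ (fun x : ZMod n => IsUnit (x * (x - 2)))
      (fun m hmn hu hu1 => right_iff hu1)]
    have hset : {x : ZMod n | IsUnit x ∧ IsUnit (x - 1) ∧ IsUnit (x * (x - 2))}
        = {x : ZMod n | ∀ a ∈ ({0, 1, 2} : Finset ℤ), IsUnit (x - (a : ZMod n))} := by
      ext x
      simp only [Set.mem_setOf_eq, Finset.mem_insert, Finset.mem_singleton,
        forall_eq_or_imp, forall_eq, Int.cast_zero, Int.cast_one, Int.cast_two, sub_zero,
        IsUnit.mul_iff]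
      tauto
    rw [hset, Set.ncard_image_of_injective _ (ZMod.val_injective n),
      ← Nat.card_coe_set_eq]
    exact cnt_eq (by omega) hodd _ hA1
  · rw [set_eq hn _ (fun x : ZMod n => IsUnit ((x - 1) * (x + 1)))
      (fun m hmn hu hu1 => left_iff hu)]
    have hset : {x : ZMod n | IsUnit x ∧ IsUnit (x - 1) ∧ IsUnit ((x - 1) * (x + 1))}
        = {x : ZMod n | ∀ a ∈ ({-1, 0, 1} : Finset ℤ), IsUnit (x - (a : ZMod n))} := by
      ext x
      simp only [Set.mem_setOf_eq, Finset.mem_insert, Finset.mem_singleton,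
        forall_eq_or_imp, forall_eq, Int.cast_zero, Int.cast_one, Int.cast_neg, sub_zero,
        sub_neg_eq_add, IsUnit.mul_iff]
      tauto
    rw [hset, Set.ncard_image_of_injective _ (ZMod.val_injective n),
      ← Nat.card_coe_set_eq]
    exact cnt_eq (by omega) hodd _ hA2
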